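/- Let 0 ≤ n₁ ≤ ... ≤ n_L ≤ n. For j ∈ {1,2}, suppose given nested chains g_{1,j} ⊆ g_{2,j} ⊆ ... ⊆ g_{L,j} of subsets of {1,...,n} with |g_{q,j}| = n_q, arising as g_{q,j} = η_{q,j}^{-1}({1,...,n_q}) for products of standard coset representatives η_{q,j} as in the paper. Then the following are equivalent: (A) tr^{n_L}(η_{L,1}) = tr^{n_L}(η_{L,2}); (B) the unique order-preserving bijection τ' : g_{L,1} → g_{L,2} satisfies τ'(g_{q,1}) = g_{q,2} for all 1 ≤ q ≤ L; (C) tr^{n_q}(η_{q,1}) = tr^{n_q}(η_{q,2}) for all 1 ≤ q ≤ L. -/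

import Mathlib

open Equiv Finset

/-- The initial segment `{i : Fin n | i < m}` (corresponding to `{1,...,m}`). -/
def Ilt (n m : ℕ) : Finset (Fin n) := Finset.univ.filter fun i => (i : ℕ) < m

/-- `γ` assigns to each subset `f` of `Fin n` its standard coset representative: the unique
permutation mapping the initial segment of length `f.card` onto `f` order-preservingly and
the complement order-preservingly. -/
def IsStdRep {n : ℕ} (γ : Finset (Fin n) → Equiv.Perm (Fin n)) : Prop :=
  ∀ f : Finset (Fin n),
    (∀ i : Fin n, (i : ℕ) < f.card ↔ γ f i ∈ f) ∧
    StrictMonoOn (γ f) {i : Fin n | (i : ℕ) < f.card} ∧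
    StrictMonoOn (γ f) {i : Fin n | f.card ≤ (i : ℕ)}

/-- `β^m(σ) = σ⁻¹({1,...,m})`. -/
def betaF {n : ℕ} (m : ℕ) (σ : Equiv.Perm (Fin n)) : Finset (Fin n) :=
  (Ilt n m).image ⇑σ⁻¹

/-- `tr^m(σ) = σ · γ_{β^m(σ)}`. -/
def trF {n : ℕ} (γ : Finset (Fin n) → Equiv.Perm (Fin n)) (m : ℕ)
    (σ : Equiv.Perm (Fin n)) : Equiv.Perm (Fin n) :=
  σ * γ (betaF m σ)

namespace ChainAux

variable {n : ℕ}

lemma mem_Ilt {m : ℕ} {i : Fin n} : i ∈ Ilt n m ↔ (i : ℕ) < m := by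
  simp [Ilt]

lemma coe_Ilt (m : ℕ) : (↑(Ilt n m) : Set (Fin n)) = {i : Fin n | (i : ℕ) < m} := by
  ext i; simp [mem_Ilt]

lemma coe_Ilt_compl (m : ℕ) : (↑((Ilt n m)ᶜ) : Set (Fin n)) = {i : Fin n | m ≤ (i : ℕ)} := by
  ext i; simp [mem_Ilt, Nat.not_lt]

lemma card_Ilt {m : ℕ} (h : m ≤ n) : (Ilt n m).card = m := by
  have : Ilt n m = (Finset.univ : Finset (Fin m)).map ⟨Fin.castLE h, Fin.castLE_injective h⟩ := by
    ext i
    simp only [mem_Ilt, Finset.mem_map, Finset.mem_univ, true_and, Function.Embedding.coeFn_mk]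
    constructor
    · intro hi; exact ⟨⟨i, hi⟩, by ext; rfl⟩
    · rintro ⟨j, rfl⟩; exact j.2
  rw [this, Finset.card_map, Finset.card_univ, Fintype.card_fin]

lemma Ilt_subset {m m' : ℕ} (h : m ≤ m') : Ilt n m ⊆ Ilt n m' := fun i hi =>
  mem_Ilt.2 (lt_of_lt_of_le (mem_Ilt.1 hi) h)

/-- order-preserving bijection of finsets, as a property of a global function. -/
def OP (A B : Finset (Fin n)) (φ : Fin n → Fin n) : Prop :=
  StrictMonoOn φ ↑A ∧ A.image φ = B

lemma OP.maps {A B : Finset (Fin n)} {φ} (h : OP A B φ) {x} (hx : x ∈ A) : φ x ∈ B := by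
  rw [← h.2]; exact Finset.mem_image_of_mem _ hx

lemma OP.comp {A B C : Finset (Fin n)} {φ ψ} (h1 : OP A B φ) (h2 : OP B C ψ) :
    OP A C (ψ ∘ φ) := by
  refine ⟨fun x hx y hy hxy => h2.1 (h1.maps hx) (h1.maps hy) (h1.1 hx hy hxy), ?_⟩
  rw [← Finset.image_image, h1.2, h2.2]

lemma OP.congr {A B : Finset (Fin n)} {φ ψ} (h : OP A B φ) (he : ∀ x ∈ A, φ x = ψ x) :
    OP A B ψ := by
  refine ⟨fun x hx y hy hxy => by rw [← he x hx, ← he y hy]; exact h.1 hx hy hxy, ?_⟩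
  rw [← h.2]; exact Finset.image_congr fun x hx => (he x hx).symm

lemma OP.restrict {A B A' : Finset (Fin n)} {φ} (h : OP A B φ) (hA : A' ⊆ A) :
    OP A' (A'.image φ) φ :=
  ⟨h.1.mono (by exact_mod_cast hA), rfl⟩

lemma OP.unique {A B : Finset (Fin n)} {φ ψ} (h1 : OP A B φ) (h2 : OP A B ψ) :
    ∀ x ∈ A, φ x = ψ x := by
  intro x hx
  have e := A.orderIsoOfFin rfl
  have hB : B.card = A.card := by
    rw [← h1.2, Finset.card_image_of_injOn h1.1.injOn]
  have key : ∀ (χ : Fin n → Fin n), OP A B χ →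
      (fun i : Fin A.card => χ (e i)) = B.orderEmbOfFin hB := by
    intro χ hχ
    refine Finset.orderEmbOfFin_unique hB (fun i => hχ.maps (e i).2) ?_
    intro i j hij
    exact hχ.1 (e i).2 (e j).2 (by exact_mod_cast e.strictMono hij)
  have h1' := key φ h1
  have h2' := key ψ h2
  have hxa : x = ↑(e (e.symm ⟨x, hx⟩)) := by simp
  calc φ x = φ (e (e.symm ⟨x, hx⟩)) := by rw [← hxa]
    _ = ψ (e (e.symm ⟨x, hx⟩)) := by
        have := congrFun h1' (e.symm ⟨x, hx⟩)
        have := congrFun h2' (e.symm ⟨x, hx⟩)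
        simp_all
    _ = ψ x := by rw [← hxa]

lemma OP.id (A : Finset (Fin n)) : OP A A id := ⟨fun x _ y _ h => h, Finset.image_id⟩

lemma OP.eq_self {A : Finset (Fin n)} {φ} (h : OP A A φ) : ∀ x ∈ A, φ x = x :=
  h.unique (OP.id A)

lemma image_perm_compl (σ : Equiv.Perm (Fin n)) (A : Finset (Fin n)) :
    Aᶜ.image ⇑σ = (A.image ⇑σ)ᶜ := by
  rw [Finset.compl_eq_univ_sdiff, Finset.compl_eq_univ_sdiff,
    Finset.image_sdiff _ _ σ.injective]
  congr 1
  ext x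
  simp only [Finset.mem_image, Finset.mem_univ, true_and, iff_true]
  exact ⟨σ⁻¹ x, by simp⟩

lemma mem_image_perm {σ : Equiv.Perm (Fin n)} {A : Finset (Fin n)} {x : Fin n} :
    x ∈ A.image ⇑σ ↔ σ⁻¹ x ∈ A := by
  constructor
  · rintro h; rcases Finset.mem_image.1 h with ⟨y, hy, rfl⟩; simpa using hy
  · intro h; exact Finset.mem_image.2 ⟨σ⁻¹ x, h, by simp⟩

lemma image_image_perm_inv (σ : Equiv.Perm (Fin n)) (A : Finset (Fin n)) :
    (A.image ⇑σ).image ⇑σ⁻¹ = A := by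
  rw [Finset.image_image]
  have : (⇑σ⁻¹ ∘ ⇑σ) = id := by ext x; simp
  rw [this, Finset.image_id]

lemma OP.inv {A B : Finset (Fin n)} {σ : Equiv.Perm (Fin n)} (h : OP A B ⇑σ) :
    OP B A ⇑σ⁻¹ := by
  constructor
  · intro x hx y hy hxy
    rw [← h.2] at hx hy
    rcases Finset.mem_image.1 hx with ⟨a, ha, rfl⟩
    rcases Finset.mem_image.1 hy with ⟨b, hb, rfl⟩
    simp only [Perm.coe_inv, Equiv.symm_apply_apply]
    rcases lt_trichotomy a b with h' | h' | h'
    · exact h'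
    · subst h'; exact absurd hxy (lt_irrefl _)
    · exact absurd (h.1 hb ha h') (not_lt.2 hxy.le)
  · rw [← h.2, image_image_perm_inv]

variable {γ : Finset (Fin n) → Equiv.Perm (Fin n)}

lemma gamma_OP (hγ : IsStdRep γ) (s : Finset (Fin n)) : OP (Ilt n s.card) s ⇑(γ s) := by
  have hc : s.card ≤ n := by
    simpa using Finset.card_le_card (Finset.subset_univ s)
  constructor
  · rw [coe_Ilt]; exact (hγ s).2.1
  · apply Finset.eq_of_subset_of_card_le
    · intro x hx
      rcases Finset.mem_image.1 hx with ⟨i, hi, rfl⟩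
      exact ((hγ s).1 i).1 (mem_Ilt.1 hi)
    · rw [Finset.card_image_of_injective _ (γ s).injective, card_Ilt hc]

lemma gamma_OP_compl (hγ : IsStdRep γ) (s : Finset (Fin n)) :
    OP (Ilt n s.card)ᶜ sᶜ ⇑(γ s) := by
  constructor
  · rw [coe_Ilt_compl]; exact (hγ s).2.2
  · rw [image_perm_compl, (gamma_OP hγ s).2]

lemma smo_ge {φ : Fin n → Fin n} {m : ℕ} (h : StrictMonoOn φ {i : Fin n | (i : ℕ) < m}) :
    ∀ i : Fin n, (i : ℕ) < m → (i : ℕ) ≤ (φ i : ℕ) := by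
  have : ∀ k : ℕ, ∀ i : Fin n, (i : ℕ) = k → k < m → k ≤ (φ i : ℕ) := by
    intro k
    induction k with
    | zero => intro i _ _; exact Nat.zero_le _
    | succ k ih =>
      intro i hik hkm
      have hkn : k < n := lt_of_lt_of_le (by omega) (by omega : (i:ℕ) ≤ n)
      set i' : Fin n := ⟨k, by omega⟩ with hi'
      have h1 : k ≤ (φ i' : ℕ) := ih i' rfl (by omega)
      have h2 : φ i' < φ i := h (by simp [hi']; omega) (by simp; omega) (by
        rw [Fin.lt_def]; simp [hi']; omega)
      have := Fin.lt_def.1 h2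
      omega
  intro i hi
  exact this (i : ℕ) i rfl hi

lemma gamma_fix (hγ : IsStdRep γ) {s : Finset (Fin n)} {m : ℕ}
    (hsub : Ilt n m ⊆ s) {i : Fin n} (hi : (i : ℕ) < m) : γ s i = i := by
  have hiI : i ∈ Ilt n m := mem_Ilt.2 hi
  have him : (min m n) ≤ s.card := by
    have : Ilt n (min m n) ⊆ s := fun x hx => hsub (mem_Ilt.2 (lt_of_lt_of_le (mem_Ilt.1 hx) (min_le_left _ _)))
    calc min m n = (Ilt n (min m n)).card := (card_Ilt (min_le_right _ _)).symm
      _ ≤ s.card := Finset.card_le_card this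
  have hi' : (i : ℕ) < min m n := lt_min hi i.2
  -- k := (γ s)⁻¹ i
  set k : Fin n := (γ s)⁻¹ i with hk
  have hks : γ s k = i := by simp [hk]
  have hkc : (k : ℕ) < s.card := ((hγ s).1 k).2 (by rw [hks]; exact hsub hiI)
  -- k ≤ γ s k = i
  have h1 : (k : ℕ) ≤ (i : ℕ) := by
    have := smo_ge (hγ s).2.1 k hkc
    rw [hks] at this; exact this
  -- inverse strict mono on Ilt n (min m n), so i ≤ k
  have hinv : StrictMonoOn (fun x => (γ s)⁻¹ x) {x : Fin n | (x : ℕ) < min m n} := by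
    intro x hx y hy hxy
    simp only [Set.mem_setOf_eq] at hx hy
    have hxs : x ∈ s := hsub (mem_Ilt.2 (lt_of_lt_of_le hx (min_le_left _ _)))
    have hys : y ∈ s := hsub (mem_Ilt.2 (lt_of_lt_of_le hy (min_le_left _ _)))
    have hxc : ((γ s)⁻¹ x : ℕ) < s.card := ((hγ s).1 _).2 (by simp [hxs])
    have hyc : ((γ s)⁻¹ y : ℕ) < s.card := ((hγ s).1 _).2 (by simp [hys])
    rcases lt_trichotomy ((γ s)⁻¹ x) ((γ s)⁻¹ y) with h' | h' | h'
    · exact h'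
    · have hxy' : x = y := by simpa using congrArg (γ s) h'
      subst hxy'; exact absurd hxy (lt_irrefl _)
    · have := (hγ s).2.1 (by simpa using hyc) (by simpa using hxc) h'
      simp only [Perm.coe_inv, Equiv.apply_symm_apply] at this
      exact absurd this (not_lt.2 hxy.le)
  have h2 : (i : ℕ) ≤ (k : ℕ) := smo_ge hinv i hi'
  have hki : k = i := Fin.ext (le_antisymm h1 h2)
  conv_lhs => rw [← hki]
  exact hks

end ChainAux

/-- Part 2 of the chain lemma: for two nested chains `g_{1,j} ⊆ ⋯ ⊆ g_{L,j}` (`j = 0, 1`)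
with `|g_{q,j}| = n_q`, arising as `g_{q,j} = β^{n_q}(η_{q,j})` for the products
`η_{q,j} = γ_{f_{q,j}}⁻¹ ⋯ γ_{f_{1,j}}⁻¹` of standard coset representatives, the following
are equivalent: (A) `tr^{n_L}(η_{L,0}) = tr^{n_L}(η_{L,1})`; (B) the unique order-preserving
bijection `τ' : g_{L,0} → g_{L,1}` satisfies `τ'(g_{q,0}) = g_{q,1}` for all `1 ≤ q ≤ L`;
(C) `tr^{n_q}(η_{q,0}) = tr^{n_q}(η_{q,1})` for all `1 ≤ q ≤ L`. -/
theorem chain_lemma_part_two (n L : ℕ) (hL : 1 ≤ L)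
    (γ : Finset (Fin n) → Equiv.Perm (Fin n)) (hγ : IsStdRep γ)
    (nseq : ℕ → ℕ)
    (hmono : ∀ q, 1 ≤ q → q < L → nseq q ≤ nseq (q + 1))
    (hlen : ∀ q, 1 ≤ q → q ≤ L → nseq q ≤ n)
    (f : Fin 2 → ℕ → Finset (Fin n))
    (hcard : ∀ j q, 1 ≤ q → q ≤ L → (f j q).card = nseq q)
    (η : Fin 2 → ℕ → Equiv.Perm (Fin n)) (hη0 : ∀ j, η j 0 = 1)
    (hηrec : ∀ j q, 1 ≤ q → q ≤ L → η j q = (γ (f j q))⁻¹ * η j (q - 1))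
    (g : Fin 2 → ℕ → Finset (Fin n))
    (hg : ∀ j q, 1 ≤ q → q ≤ L → g j q = betaF (nseq q) (η j q))
    (hnested : ∀ j q, 1 ≤ q → q < L → g j q ⊆ g j (q + 1))
    (hcontain : ∀ j q, 2 ≤ q → q ≤ L → Ilt n (nseq (q - 1)) ⊆ f j q) :
    ((trF γ (nseq L) (η 0 L) = trF γ (nseq L) (η 1 L)) ↔
      (∀ (τ : {x // x ∈ g 0 L} ≃o {x // x ∈ g 1 L}) (q : ℕ), 1 ≤ q → q ≤ L →
        ∀ x : {x // x ∈ g 0 L}, ((x : Fin n) ∈ g 0 q ↔ ((τ x : {x // x ∈ g 1 L}) : Fin n) ∈ g 1 q))) ∧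
    ((trF γ (nseq L) (η 0 L) = trF γ (nseq L) (η 1 L)) ↔
      (∀ q, 1 ≤ q → q ≤ L → trF γ (nseq q) (η 0 q) = trF γ (nseq q) (η 1 q))) := by
  classical
  open ChainAux in
  have Hmono2 : ∀ q p, 1 ≤ q → q ≤ p → p ≤ L → nseq q ≤ nseq p := by
    intro q p h1 hqp hpL
    induction p with
    | zero => omega
    | succ p ih =>
      rcases Nat.lt_or_ge q (p + 1) with h | h
      · calc nseq q ≤ nseq p := ih (by omega) (by omega)
          _ ≤ nseq (p + 1) := hmono p (by omega) (by omega)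
      · have : q = p + 1 := by omega
        subst this; exact le_rfl
  have Hcard : ∀ j q, 1 ≤ q → q ≤ L → (g j q).card = nseq q := by
    intro j q h1 h2
    rw [hg j q h1 h2, betaF, Finset.card_image_of_injective _ (η j q)⁻¹.injective,
      ChainAux.card_Ilt (hlen q h1 h2)]
  have Hmem : ∀ j q, 1 ≤ q → q ≤ L → ∀ x : Fin n, x ∈ g j q ↔ (η j q x : ℕ) < nseq q := by
    intro j q h1 h2 x
    rw [hg j q h1 h2, betaF, ChainAux.mem_image_perm]
    simp [ChainAux.mem_Ilt]
  have Himg : ∀ j q, 1 ≤ q → q ≤ L → (g j q).image ⇑(η j q) = Ilt n (nseq q) := by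
    intro j q h1 h2
    ext y
    rw [ChainAux.mem_image_perm, Hmem j q h1 h2, ChainAux.mem_Ilt]
    simp
  have Hstab : ∀ j q p, 1 ≤ q → q ≤ p → p ≤ L → ∀ x ∈ g j q, η j p x = η j q x := by
    intro j q p h1 hqp
    induction p with
    | zero => omega
    | succ p ih =>
      intro hpL x hx
      rcases Nat.lt_or_ge q (p + 1) with h | h
      · have hIH := ih (by omega) (by omega) x hx
        rw [hηrec j (p + 1) (by omega) hpL]
        simp only [Nat.add_sub_cancel, Equiv.Perm.mul_apply]
        rw [hIH]
        have hval : (η j q x : ℕ) < nseq p :=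
          lt_of_lt_of_le ((Hmem j q h1 (by omega) x).1 hx) (Hmono2 q p h1 (by omega) (by omega))
        have hcont := hcontain j (p + 1) (by omega) hpL
        simp only [Nat.add_sub_cancel] at hcont
        have hfix : γ (f j (p + 1)) (η j q x) = η j q x :=
          ChainAux.gamma_fix hγ hcont hval
        have := congrArg ⇑(γ (f j (p + 1)))⁻¹ hfix
        simpa using this.symm
      · have : q = p + 1 := by omega
        subst this; rfl
  have Hnest2 : ∀ j q p, 1 ≤ q → q ≤ p → p ≤ L → g j q ⊆ g j p := by
    intro j q p h1 hqp
    induction p with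
    | zero => omega
    | succ p ih =>
      intro hpL
      rcases Nat.lt_or_ge q (p + 1) with h | h
      · exact (ih (by omega) (by omega)).trans (hnested j p (by omega) (by omega))
      · have : q = p + 1 := by omega
        subst this; exact fun _ hx => hx
  have HOPg : ∀ j q, 1 ≤ q → q ≤ L →
      ChainAux.OP (Ilt n (nseq q)) (g j q) ⇑(γ (g j q)) := by
    intro j q h1 h2
    have := ChainAux.gamma_OP hγ (g j q)
    rwa [Hcard j q h1 h2] at this
  have HOPgc : ∀ j q, 1 ≤ q → q ≤ L →
      ChainAux.OP (Ilt n (nseq q))ᶜ (g j q)ᶜ ⇑(γ (g j q)) := by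
    intro j q h1 h2
    have := ChainAux.gamma_OP_compl hγ (g j q)
    rwa [Hcard j q h1 h2] at this
  have Hg1 : ∀ j, g j 1 = f j 1 := by
    intro j
    have hη1 : η j 1 = (γ (f j 1))⁻¹ := by
      rw [hηrec j 1 le_rfl hL]; simp [hη0]
    ext x
    rw [Hmem j 1 le_rfl hL, hη1]
    have := (hγ (f j 1)).1 ((γ (f j 1))⁻¹ x)
    rw [hcard j 1 le_rfl hL] at this
    simpa using this
  have HgfL : ∀ j q, 2 ≤ q → q ≤ L → (g j q).image ⇑(η j (q - 1)) = f j q := by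
    intro j q h2 hqL
    have h1 : 1 ≤ q := by omega
    ext y
    rw [ChainAux.mem_image_perm, Hmem j q h1 hqL, hηrec j q h1 hqL]
    simp only [Equiv.Perm.mul_apply, Equiv.Perm.coe_inv, Equiv.apply_symm_apply]
    have := (hγ (f j q)).1 ((γ (f j q))⁻¹ y)
    rw [hcard j q h1 hqL] at this
    simpa using this
  have Hcomp : ∀ j q, 1 ≤ q → q ≤ L →
      ChainAux.OP (g j q)ᶜ (Ilt n (nseq q))ᶜ ⇑(η j q) := by
    intro j q
    induction q with
    | zero => omega
    | succ q ih =>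
      intro _ hqL
      by_cases hq0 : q = 0
      · subst hq0
        have r := (ChainAux.gamma_OP_compl hγ (f j 1))
        rw [hcard j 1 le_rfl hL] at r
        have r' : ChainAux.OP (f j 1)ᶜ (Ilt n (nseq 1))ᶜ ⇑(η j 1) :=
          r.inv.congr (fun x _ => by simp [hηrec j 1 le_rfl hL, hη0])
        rwa [← Hg1 j] at r'
      · have hq1 : 1 ≤ q := by omega
        have hqL' : q ≤ L := by omega
        have IH := ih hq1 hqL'
        have hsub : (g j (q + 1))ᶜ ⊆ (g j q)ᶜ :=
          Finset.compl_subset_compl.2 (hnested j q hq1 (by omega))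
        have r1 := IH.restrict hsub
        have himg : ((g j (q + 1))ᶜ).image ⇑(η j q) = (f j (q + 1))ᶜ := by
          rw [ChainAux.image_perm_compl]
          have := HgfL j (q + 1) (by omega) hqL
          simp only [Nat.add_sub_cancel] at this
          rw [this]
        rw [himg] at r1
        have r2 := (ChainAux.gamma_OP_compl hγ (f j (q + 1)))
        rw [hcard j (q + 1) (by omega) hqL] at r2
        have := r1.comp r2.inv
        refine this.congr fun x _ => ?_
        rw [hηrec j (q + 1) (by omega) hqL]
        simp [Equiv.Perm.mul_apply]
  have Hpiece : ∀ j q, 1 ≤ q → q ≤ L →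
      ChainAux.OP (g j q \ (if q = 1 then ∅ else g j (q - 1)))
        (Ilt n (nseq q) \ (if q = 1 then ∅ else Ilt n (nseq (q - 1)))) ⇑(η j q) := by
    intro j q h1 h2
    by_cases hq : q = 1
    · subst hq
      rw [if_pos rfl, if_pos rfl, Finset.sdiff_empty, Finset.sdiff_empty]
      have r := (ChainAux.gamma_OP hγ (f j 1))
      rw [hcard j 1 le_rfl hL] at r
      have r' : ChainAux.OP (f j 1) (Ilt n (nseq 1)) ⇑(η j 1) :=
        r.inv.congr (fun x _ => by simp [hηrec j 1 le_rfl hL, hη0])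
      rwa [← Hg1 j] at r'
    · have h2q : 2 ≤ q := by omega
      have hq1 : 1 ≤ q - 1 := by omega
      have hq1L : q - 1 ≤ L := by omega
      have hq1q : q - 1 < q := by omega
      simp only [if_neg hq]
      have hsub : g j q \ g j (q - 1) ⊆ (g j (q - 1))ᶜ := by
        intro x hx
        rw [Finset.mem_compl]
        exact (Finset.mem_sdiff.1 hx).2
      have r1 := (Hcomp j (q - 1) hq1 hq1L).restrict hsub
      have himg : (g j q \ g j (q - 1)).image ⇑(η j (q - 1)) = f j q \ Ilt n (nseq (q - 1)) := by
        rw [Finset.image_sdiff _ _ (η j (q - 1)).injective, HgfL j q h2q h2,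
          Himg j (q - 1) hq1 hq1L]
      rw [himg] at r1
      have r2 := (ChainAux.gamma_OP hγ (f j q))
      rw [hcard j q h1 h2] at r2
      have r2' := r2.inv
      have r2'' := r2'.restrict (Finset.sdiff_subset (s := f j q) (t := Ilt n (nseq (q - 1))))
      have himg2 : (f j q \ Ilt n (nseq (q - 1))).image ⇑(γ (f j q))⁻¹
          = Ilt n (nseq q) \ Ilt n (nseq (q - 1)) := by
        rw [Finset.image_sdiff _ _ (γ (f j q))⁻¹.injective, r2'.2]
        congr 1
        have hfix : ∀ x ∈ Ilt n (nseq (q - 1)), (γ (f j q))⁻¹ x = x := by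
          intro x hx
          have hfx : γ (f j q) x = x :=
            ChainAux.gamma_fix hγ (hcontain j q h2q h2) (ChainAux.mem_Ilt.1 hx)
          have := congrArg ⇑(γ (f j q))⁻¹ hfx
          simpa using this.symm
        rw [Finset.image_congr (g := id) (fun x hx => hfix x hx), Finset.image_id]
      rw [himg2] at r2''
      refine (r1.comp r2'').congr fun x _ => ?_
      rw [hηrec j q h1 h2]
      simp [Equiv.Perm.mul_apply]
  -- the relative position sets
  have HSop : ∀ j q, 1 ≤ q → q ≤ L →
      ChainAux.OP (g j q) ((g j q).image ⇑(γ (g j L))⁻¹) ⇑(γ (g j L))⁻¹ := by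
    intro j q h1 h2
    exact ((HOPg j L hL le_rfl).inv).restrict (Hnest2 j q L h1 h2 le_rfl)
  have HSsub : ∀ j q, 1 ≤ q → q ≤ L → (g j q).image ⇑(γ (g j L))⁻¹ ⊆ Ilt n (nseq L) := by
    intro j q h1 h2 x hx
    rcases Finset.mem_image.1 hx with ⟨y, hy, rfl⟩
    exact ((HOPg j L hL le_rfl).inv).maps (Hnest2 j q L h1 h2 le_rfl hy)
  have HmemS : ∀ j q (x : Fin n), x ∈ (g j q).image ⇑(γ (g j L))⁻¹ ↔ γ (g j L) x ∈ g j q := by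
    intro j q x
    rw [ChainAux.mem_image_perm]
    simp
  have HgS : ∀ j q, ((g j q).image ⇑(γ (g j L))⁻¹).image ⇑(γ (g j L)) = g j q := by
    intro j q
    rw [Finset.image_image]
    have : ⇑(γ (g j L)) ∘ ⇑(γ (g j L))⁻¹ = id := by ext x; simp
    rw [this, Finset.image_id]
  have HtrF : ∀ j q, 1 ≤ q → q ≤ L → trF γ (nseq q) (η j q) = η j q * γ (g j q) := by
    intro j q h1 h2
    rw [trF, ← hg j q h1 h2]
  have HDfix : ∀ j q, 1 ≤ q → q ≤ L → ∀ x : Fin n, ¬((x : ℕ) < nseq q) →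
      trF γ (nseq q) (η j q) x = x := by
    intro j q h1 h2 x hx
    have hOP := (HOPgc j q h1 h2).comp (Hcomp j q h1 h2)
    have hOP' : ChainAux.OP (Ilt n (nseq q))ᶜ (Ilt n (nseq q))ᶜ ⇑(trF γ (nseq q) (η j q)) := by
      refine hOP.congr fun y _ => ?_
      rw [HtrF j q h1 h2]
      simp [Equiv.Perm.mul_apply]
    exact hOP'.eq_self x (Finset.mem_compl.2 fun hc => hx (ChainAux.mem_Ilt.1 hc))
  have HSD : ∀ j q, 1 ≤ q → q ≤ L → ∀ x : Fin n,
      x ∈ (g j q).image ⇑(γ (g j L))⁻¹ ↔ trF γ (nseq L) (η j L) x ∈ Ilt n (nseq q) := by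
    intro j q h1 h2 x
    rw [HmemS, HtrF j L hL le_rfl]
    have e1 : (g j q).image ⇑(η j L) = Ilt n (nseq q) := by
      rw [← Himg j q h1 h2]
      exact Finset.image_congr fun y hy => Hstab j q L h1 h2 le_rfl y hy
    rw [← e1, ChainAux.mem_image_perm]
    simp [Equiv.Perm.mul_apply]
  have HAS : trF γ (nseq L) (η 0 L) = trF γ (nseq L) (η 1 L) →
      ∀ q, 1 ≤ q → q ≤ L →
        (g 0 q).image ⇑(γ (g 0 L))⁻¹ = (g 1 q).image ⇑(γ (g 1 L))⁻¹ := by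
    intro hA q h1 h2
    ext x
    rw [HSD 0 q h1 h2 x, HSD 1 q h1 h2 x, hA]
  have HSL : ∀ j, (g j L).image ⇑(γ (g j L))⁻¹ = Ilt n (nseq L) := by
    intro j
    exact ((HOPg j L hL le_rfl).inv).2
  have HBA : (∀ q, 1 ≤ q → q ≤ L →
        (g 0 q).image ⇑(γ (g 0 L))⁻¹ = (g 1 q).image ⇑(γ (g 1 L))⁻¹) →
      trF γ (nseq L) (η 0 L) = trF γ (nseq L) (η 1 L) := by
    intro hSeq
    have OPtr : ∀ j q, 1 ≤ q → q ≤ L →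
        ChainAux.OP
          ((g j q).image ⇑(γ (g j L))⁻¹ \
            (if q = 1 then ∅ else (g j (q - 1)).image ⇑(γ (g j L))⁻¹))
          (Ilt n (nseq q) \ (if q = 1 then ∅ else Ilt n (nseq (q - 1))))
          ⇑(trF γ (nseq L) (η j L)) := by
      intro j q h1 h2
      have hsubS : (g j q).image ⇑(γ (g j L))⁻¹ \
          (if q = 1 then ∅ else (g j (q - 1)).image ⇑(γ (g j L))⁻¹) ⊆ Ilt n (nseq L) :=
        fun x hx => HSsub j q h1 h2 (Finset.mem_sdiff.1 hx).1
      have r1 := (HOPg j L hL le_rfl).restrict hsubS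
      have himg1 : ((g j q).image ⇑(γ (g j L))⁻¹ \
            (if q = 1 then ∅ else (g j (q - 1)).image ⇑(γ (g j L))⁻¹)).image ⇑(γ (g j L))
          = g j q \ (if q = 1 then ∅ else g j (q - 1)) := by
        rw [Finset.image_sdiff _ _ (γ (g j L)).injective, HgS j q]
        congr 1
        by_cases hq : q = 1
        · simp [hq]
        · simp only [if_neg hq]
          exact HgS j (q - 1)
      rw [himg1] at r1
      have r2 := Hpiece j q h1 h2
      refine (r1.comp r2).congr fun x hx => ?_
      have hxg : γ (g j L) x ∈ g j q := (Finset.mem_sdiff.1 (r1.maps hx)).1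
      rw [HtrF j L hL le_rfl]
      simp only [Equiv.Perm.mul_apply, Function.comp_apply]
      exact (Hstab j q L h1 h2 le_rfl _ hxg).symm
    apply Equiv.ext
    intro x
    by_cases hx : (x : ℕ) < nseq L
    · have hexists : ∃ q, 1 ≤ q ∧ q ≤ L ∧ x ∈ (g 0 q).image ⇑(γ (g 0 L))⁻¹ :=
        ⟨L, hL, le_rfl, by rw [HSL 0]; exact ChainAux.mem_Ilt.2 hx⟩
      obtain ⟨hq1, hqL, hxS⟩ := Nat.find_spec hexists
      set q₀ := Nat.find hexists with hq₀
      have hxprev : x ∈ (g 0 q₀).image ⇑(γ (g 0 L))⁻¹ \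
          (if q₀ = 1 then ∅ else (g 0 (q₀ - 1)).image ⇑(γ (g 0 L))⁻¹) := by
        rw [Finset.mem_sdiff]
        refine ⟨hxS, ?_⟩
        by_cases hq : q₀ = 1
        · simp [hq]
        · simp only [if_neg hq]
          intro hxp
          exact Nat.find_min hexists (m := q₀ - 1) (by omega) ⟨by omega, by omega, hxp⟩
      have hsets : (g 1 q₀).image ⇑(γ (g 1 L))⁻¹ \
            (if q₀ = 1 then ∅ else (g 1 (q₀ - 1)).image ⇑(γ (g 1 L))⁻¹)
          = (g 0 q₀).image ⇑(γ (g 0 L))⁻¹ \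
            (if q₀ = 1 then ∅ else (g 0 (q₀ - 1)).image ⇑(γ (g 0 L))⁻¹) := by
        rw [hSeq q₀ hq1 hqL]
        congr 1
        by_cases hq : q₀ = 1
        · simp [hq]
        · simp only [if_neg hq]
          exact (hSeq (q₀ - 1) (by omega) (by omega)).symm
      have o0 := OPtr 0 q₀ hq1 hqL
      have o1 := OPtr 1 q₀ hq1 hqL
      rw [hsets] at o1
      exact o0.unique o1 x hxprev
    · rw [HDfix 0 L hL le_rfl x hx, HDfix 1 L hL le_rfl x hx]
  have HAC : trF γ (nseq L) (η 0 L) = trF γ (nseq L) (η 1 L) →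
      ∀ q, 1 ≤ q → q ≤ L → trF γ (nseq q) (η 0 q) = trF γ (nseq q) (η 1 q) := by
    intro hA q h1 h2
    have hSeq := HAS hA
    apply Equiv.ext
    intro x
    by_cases hx : (x : ℕ) < nseq q
    · have c0 : ChainAux.OP (Ilt n (nseq q)) ((g 0 q).image ⇑(γ (g 0 L))⁻¹)
          (⇑(γ (g 0 L))⁻¹ ∘ ⇑(γ (g 0 q))) :=
        (HOPg 0 q h1 h2).comp (HSop 0 q h1 h2)
      have c1 : ChainAux.OP (Ilt n (nseq q)) ((g 1 q).image ⇑(γ (g 1 L))⁻¹)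
          (⇑(γ (g 1 L))⁻¹ ∘ ⇑(γ (g 1 q))) :=
        (HOPg 1 q h1 h2).comp (HSop 1 q h1 h2)
      rw [← hSeq q h1 h2] at c1
      have hcx := c0.unique c1 x (ChainAux.mem_Ilt.2 hx)
      have key : ∀ j, trF γ (nseq q) (η j q) x
          = trF γ (nseq L) (η j L) ((⇑(γ (g j L))⁻¹ ∘ ⇑(γ (g j q))) x) := by
        intro j
        rw [HtrF j q h1 h2, HtrF j L hL le_rfl]
        simp only [Equiv.Perm.mul_apply, Function.comp_apply, Equiv.Perm.coe_inv, Equiv.apply_symm_apply]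
        exact (Hstab j q L h1 h2 le_rfl _ ((HOPg j q h1 h2).maps (ChainAux.mem_Ilt.2 hx))).symm
      rw [key 0, key 1, hcx, hA]
    · rw [HDfix 0 q h1 h2 x hx, HDfix 1 q h1 h2 x hx]
  have hcard0 : (g 0 L).card = nseq L := Hcard 0 L hL le_rfl
  have hcard1 : (g 1 L).card = nseq L := Hcard 1 L hL le_rfl
  have Hτ : ∀ (τ : {x // x ∈ g 0 L} ≃o {x // x ∈ g 1 L}) (x : Fin n) (hx : x ∈ g 0 L),
      ((τ ⟨x, hx⟩ : {x // x ∈ g 1 L}) : Fin n) = γ (g 1 L) ((γ (g 0 L))⁻¹ x) := by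
    intro τ x hx
    set φ : Fin n → Fin n :=
      fun z => if h : z ∈ g 0 L then ((τ ⟨z, h⟩ : {x // x ∈ g 1 L}) : Fin n) else z with hφ
    have hmonoφ : StrictMonoOn φ ↑(g 0 L) := by
      intro a ha b hb hab
      have ha' : a ∈ g 0 L := ha
      have hb' : b ∈ g 0 L := hb
      simp only [hφ, dif_pos ha', dif_pos hb']
      exact Subtype.coe_lt_coe.2 (τ.lt_iff_lt.2 (Subtype.mk_lt_mk.2 hab))
    have hOPφ : ChainAux.OP (g 0 L) (g 1 L) φ := by
      refine ⟨hmonoφ, ?_⟩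
      apply Finset.eq_of_subset_of_card_le
      · intro y hy
        rcases Finset.mem_image.1 hy with ⟨a, ha, rfl⟩
        simp only [hφ, dif_pos ha]
        exact (τ ⟨a, ha⟩).2
      · rw [Finset.card_image_of_injOn hmonoφ.injOn, hcard0, hcard1]
    have hψ : ChainAux.OP (g 0 L) (g 1 L) (⇑(γ (g 1 L)) ∘ ⇑(γ (g 0 L))⁻¹) :=
      ((HOPg 0 L hL le_rfl).inv).comp (HOPg 1 L hL le_rfl)
    have := hOPφ.unique hψ x hx
    simpa [hφ, dif_pos hx] using this
  constructor
  · constructor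
    · rintro hA τ q h1 h2 ⟨xv, hxv⟩
      have hτx := Hτ τ xv hxv
      have hSeq := HAS hA q h1 h2
      constructor
      · intro hmem
        have hS0 : (γ (g 0 L))⁻¹ xv ∈ (g 0 q).image ⇑(γ (g 0 L))⁻¹ :=
          (HSop 0 q h1 h2).maps hmem
        rw [hSeq] at hS0
        have := (HmemS 1 q _).1 hS0
        rw [hτx]
        exact this
      · intro hmem
        rw [hτx] at hmem
        have h' : (γ (g 0 L))⁻¹ xv ∈ (g 1 q).image ⇑(γ (g 1 L))⁻¹ := (HmemS 1 q _).2 hmem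
        rw [← hSeq] at h'
        have := (HmemS 0 q _).1 h'
        simpa using this
    · intro hB
      apply HBA
      intro q h1 h2
      set τ₀ : {x // x ∈ g 0 L} ≃o {x // x ∈ g 1 L} :=
        ((g 0 L).orderIsoOfFin hcard0).symm.trans ((g 1 L).orderIsoOfFin hcard1) with hτ₀
      ext y
      constructor
      · intro hy
        have hgy : γ (g 0 L) y ∈ g 0 q := (HmemS 0 q y).1 hy
        have hgyL : γ (g 0 L) y ∈ g 0 L := Hnest2 0 q L h1 h2 le_rfl hgy
        have hiff := (hB τ₀ q h1 h2 ⟨γ (g 0 L) y, hgyL⟩).1 hgy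
        rw [Hτ τ₀ _ hgyL] at hiff
        simp only [Equiv.Perm.coe_inv, Equiv.symm_apply_apply] at hiff
        exact (HmemS 1 q y).2 hiff
      · intro hy
        have hyI : y ∈ Ilt n (nseq L) := HSsub 1 q h1 h2 hy
        have hgyL : γ (g 0 L) y ∈ g 0 L := (HOPg 0 L hL le_rfl).maps hyI
        have hτv := Hτ τ₀ _ hgyL
        simp only [Equiv.Perm.coe_inv, Equiv.symm_apply_apply] at hτv
        have hg1m : ((τ₀ ⟨γ (g 0 L) y, hgyL⟩ : {x // x ∈ g 1 L}) : Fin n) ∈ g 1 q := by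
          rw [hτv]
          exact (HmemS 1 q y).1 hy
        have := (hB τ₀ q h1 h2 ⟨γ (g 0 L) y, hgyL⟩).2 hg1m
        exact (HmemS 0 q y).2 this
  · constructor
    · exact HAC
    · intro hC
      exact hC L hL le_rfl
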